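/- For every discrete field φ, every n ∈ ℤ and every j ∈ ZMod N, T⁰⁰₊(n,j) − T⁰⁰₋(n,j) = ((φ_{n+1}^j − φ_{n−1}^j)/δ²) · R(n,j). -/
import Mathlib


/-- `σ_n = 1` if `n` is odd, `−1` if `n` is even. -/
def sgm (n : ℤ) : ℤ := if Odd n then 1 else -1

/-- The two discrete energy densities `T⁰⁰_±` of the BDdV scheme
(`s = 1` gives `T⁰⁰₊`, `s = −1` gives `T⁰⁰₋`). -/
noncomputable def T00BDdV (N : ℕ) (δ : ℝ) (φ : ℤ → ZMod N → ℝ)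
    (s : ℤ) (n : ℤ) (j : ZMod N) : ℝ :=
  ((φ (n + s) j - φ n j)^2 + (φ (n + s) j - φ n (j + (sgm n : ZMod N)))^2) / (2 * δ^2)
    - 1/4
    + (1/8) * (1 + (φ (n + s) j)^2)
        * (2 + (φ n j)^2 + (φ n (j + (sgm n : ZMod N)))^2)

/-- The residue `R(n,j)` of the BDdV scheme. -/
noncomputable def Rres (N : ℕ) (δ : ℝ) (φ : ℤ → ZMod N → ℝ)
    (n : ℤ) (j : ZMod N) : ℝ :=
  (φ (n + 1) j + φ (n - 1) j)
      * (1 + (δ^2 / 8) * (2 + (φ n j)^2 + (φ n (j + (sgm n : ZMod N)))^2))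
    - φ n j - φ n (j + (sgm n : ZMod N))

/-- The difference of the two discrete energy densities of the BDdV scheme is
proportional to the residue: `T⁰⁰₊ − T⁰⁰₋ = ((φ_{n+1}^j − φ_{n−1}^j)/δ²)·R`. -/
theorem T00_difference_eq_residue
    (N : ℕ) (hN : 1 ≤ N) (δ : ℝ) (hδ : 0 < δ)
    (φ : ℤ → ZMod N → ℝ) (n : ℤ) (j : ZMod N) :
    T00BDdV N δ φ 1 n j - T00BDdV N δ φ (-1) n j
      = ((φ (n + 1) j - φ (n - 1) j) / δ^2) * Rres N δ φ n j := by
  have h : n + (-1 : ℤ) = n - 1 := by ring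
  simp only [T00BDdV, Rres, h]
  have hδ2 : (δ:ℝ)^2 ≠ 0 := pow_ne_zero _ hδ.ne'
  field_simp
  ring
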